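/- Let c₁ > 0 and set c₂ = 1/c₁. For α₁ = α₂ = α > 2 and common threshold θ ≥ 0 with F := ₂F₁(1, -2/α; 1-2/α; -θ) and G := ₂F₁(1, -2/α; 1-2/α; -θ₂), the total coverage probability M₁ = (1/G)·1/(c₁ + F) + 1/(c₂ + F) satisfies M₁ ≤ 1, with equality iff θ = θ₂ = 0. -/

import Mathlib

open MeasureTheory Real Set

/-- The Gauss hypergeometric function `₂F₁(b, -2/α; 1-2/α; -θ)`, characterized (as in the paper)
via the integral identity `₂F₁(b,-2/α;1-2/α;-θ) = 1 + ∫₁^∞ (1 - (1+θh^(-α/2))^(-b)) dh`. -/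
noncomputable def hyp2F1 (b α θ : ℝ) : ℝ :=
  1 + ∫ h in Set.Ioi (1:ℝ), (1 - (1 + θ * h ^ (-(α/2))) ^ (-b))

lemma integrand_eq (θ x α : ℝ) :
    1 - (1 + θ * x ^ (-(α/2))) ^ (-(1:ℝ)) = 1 - (1 + θ * x ^ (-(α/2)))⁻¹ := by
  rw [Real.rpow_neg_one]

lemma integrand_nonneg {θ : ℝ} (hθ : 0 ≤ θ) {α x : ℝ} (hx : 1 < x) :
    0 ≤ 1 - (1 + θ * x ^ (-(α/2))) ^ (-(1:ℝ)) := by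
  have hx0 : (0:ℝ) < x := by linarith
  have ht : 0 ≤ θ * x ^ (-(α/2)) := mul_nonneg hθ (Real.rpow_nonneg hx0.le _)
  rw [integrand_eq θ x α]
  have h1 : (1:ℝ) ≤ 1 + θ * x ^ (-(α/2)) := by linarith
  have := inv_le_one_of_one_le₀ h1
  linarith

lemma hyp_ge_one (α : ℝ) {θ : ℝ} (hθ : 0 ≤ θ) : 1 ≤ hyp2F1 1 α θ := by
  unfold hyp2F1
  have : 0 ≤ ∫ h in Set.Ioi (1:ℝ), (1 - (1 + θ * h ^ (-(α/2))) ^ (-(1:ℝ))) :=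
    setIntegral_nonneg measurableSet_Ioi fun x hx => integrand_nonneg hθ hx
  linarith

lemma hyp_zero (α : ℝ) : hyp2F1 1 α 0 = 1 := by
  unfold hyp2F1
  simp

lemma integrable_aux {α θ : ℝ} (hα : 2 < α) (hθ : 0 ≤ θ) :
    IntegrableOn (fun h : ℝ => 1 - (1 + θ * h ^ (-(α/2))) ^ (-(1:ℝ))) (Ioi 1) := by
  have h1 : IntegrableOn (fun h : ℝ => θ * h ^ (-(α/2))) (Ioi (1:ℝ)) :=
    (integrableOn_Ioi_rpow_of_lt (by linarith) one_pos).const_mul θ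
  apply Integrable.mono h1
  · apply ContinuousOn.aestronglyMeasurable _ measurableSet_Ioi
    intro x hx
    have hx0 : (0:ℝ) < x := lt_trans one_pos hx
    have hpos : 0 < 1 + θ * x ^ (-(α/2)) := by
      have : 0 ≤ θ * x ^ (-(α/2)) := mul_nonneg hθ (Real.rpow_nonneg hx0.le _)
      linarith
    apply ContinuousWithinAt.sub continuousWithinAt_const
    apply ContinuousWithinAt.rpow_const
    · exact (continuousWithinAt_const.mul ((continuousWithinAt_id.rpow_const
        (Or.inl hx0.ne')))).const_add 1
    · exact Or.inl hpos.ne'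
  · filter_upwards [ae_restrict_mem measurableSet_Ioi] with x hx
    have hx0 : (0:ℝ) < x := lt_trans one_pos hx
    have ht : 0 ≤ θ * x ^ (-(α/2)) := mul_nonneg hθ (Real.rpow_nonneg hx0.le _)
    rw [Real.norm_eq_abs, Real.norm_eq_abs, abs_of_nonneg (integrand_nonneg hθ hx),
      abs_of_nonneg ht, integrand_eq θ x α]
    have hinv : 1 - (1 + θ * x ^ (-(α/2)))⁻¹ = (θ * x ^ (-(α/2))) / (1 + θ * x ^ (-(α/2))) := by
      field_simp
      ring
    rw [hinv]
    exact div_le_self ht (by linarith)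

lemma hyp_gt_one {α θ : ℝ} (hα : 2 < α) (hθ : 0 < θ) : 1 < hyp2F1 1 α θ := by
  unfold hyp2F1
  set f : ℝ → ℝ := fun h => 1 - (1 + θ * h ^ (-(α/2))) ^ (-(1:ℝ)) with hf
  have hint := integrable_aux hα hθ.le
  set c : ℝ := 1 - (1 + θ * 2 ^ (-(α/2)))⁻¹ with hc
  have h2pos : (0:ℝ) < (2:ℝ) ^ (-(α/2)) := Real.rpow_pos_of_pos two_pos _
  have hcpos : 0 < c := by
    have h1 : (1:ℝ) < 1 + θ * 2 ^ (-(α/2)) := by nlinarith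
    have := inv_lt_one_of_one_lt₀ h1
    simp only [hc]; linarith
  have hlb : ∀ x ∈ Ioc (1:ℝ) 2, c ≤ f x := by
    intro x hx
    have hx0 : (0:ℝ) < x := lt_trans one_pos hx.1
    have hmono : (2:ℝ) ^ (-(α/2)) ≤ x ^ (-(α/2)) := by
      rw [Real.rpow_neg (by norm_num : (0:ℝ) ≤ 2), Real.rpow_neg hx0.le]
      have hxle : x ^ (α/2) ≤ (2:ℝ) ^ (α/2) :=
        Real.rpow_le_rpow hx0.le hx.2 (by linarith)
      exact inv_anti₀ (Real.rpow_pos_of_pos hx0 _) hxle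
    have ht2 : θ * 2 ^ (-(α/2)) ≤ θ * x ^ (-(α/2)) :=
      mul_le_mul_of_nonneg_left hmono hθ.le
    have hpos2 : (0:ℝ) < 1 + θ * 2 ^ (-(α/2)) := by nlinarith
    simp only [hf, integrand_eq θ x α, hc]
    have := inv_anti₀ hpos2 (by linarith : 1 + θ * 2 ^ (-(α/2)) ≤ 1 + θ * x ^ (-(α/2)))
    linarith
  have hvol : volume (Ioc (1:ℝ) 2) ≠ ⊤ := by simp
  have hge : c * (volume (Ioc (1:ℝ) 2)).toReal ≤ ∫ x in Ioc (1:ℝ) 2, f x :=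
    setIntegral_ge_of_const_le_real measurableSet_Ioc hvol hlb
      (hint.mono_set Ioc_subset_Ioi_self)
  have hmonoset : ∫ x in Ioc (1:ℝ) 2, f x ≤ ∫ x in Ioi (1:ℝ), f x := by
    apply setIntegral_mono_set hint
    · filter_upwards [ae_restrict_mem measurableSet_Ioi] with x hx
      exact integrand_nonneg hθ.le hx
    · exact HasSubset.Subset.eventuallyLE Ioc_subset_Ioi_self
  have : (volume (Ioc (1:ℝ) 2)).toReal = 1 := by
    rw [Real.volume_Ioc]
    norm_num
  rw [this, mul_one] at hge
  linarith

lemma hyp_eq_one_iff {α θ : ℝ} (hα : 2 < α) (hθ : 0 ≤ θ) :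
    hyp2F1 1 α θ = 1 ↔ θ = 0 := by
  constructor
  · intro h
    by_contra hne
    have : 0 < θ := lt_of_le_of_ne hθ (Ne.symm hne)
    have := hyp_gt_one hα this
    linarith
  · rintro rfl; exact hyp_zero α

theorem stmt_18 (α θ θ₂ c₁ c₂ : ℝ) (hα : 2 < α) (hθ : 0 ≤ θ) (hθ₂ : 0 ≤ θ₂)
    (hc₁ : 0 < c₁) (hc₂ : c₂ = 1 / c₁) :
    1 / hyp2F1 1 α θ₂ * (1 / (c₁ + hyp2F1 1 α θ)) + 1 / (c₂ + hyp2F1 1 α θ) ≤ 1 ∧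
    (1 / hyp2F1 1 α θ₂ * (1 / (c₁ + hyp2F1 1 α θ)) + 1 / (c₂ + hyp2F1 1 α θ) = 1
      ↔ θ = 0 ∧ θ₂ = 0) := by
  subst hc₂
  set F := hyp2F1 1 α θ with hF
  set G := hyp2F1 1 α θ₂ with hG
  have hF1 : 1 ≤ F := hyp_ge_one α hθ
  have hG1 : 1 ≤ G := hyp_ge_one α hθ₂
  have hc₂pos : 0 < 1 / c₁ := by positivity
  have hd1 : 0 < c₁ + F := by linarith
  have hd2 : 0 < 1 / c₁ + F := by linarith
  have hd1' : 0 < c₁ + 1 := by linarith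
  have hd2' : 0 < 1 / c₁ + 1 := by linarith
  have key : ∀ F' G' : ℝ, 1 ≤ F' → 1 ≤ G' →
      1 / G' * (1 / (c₁ + F')) + 1 / (1 / c₁ + F') ≤ 1 / (c₁ + 1) + 1 / (1 / c₁ + 1) := by
    intro F' G' hF' hG'
    have h1 : 0 < c₁ + F' := by linarith
    have h2 : 0 < 1 / c₁ + F' := by linarith
    have hGterm : 1 / G' * (1 / (c₁ + F')) ≤ 1 / (c₁ + F') := by
      have : 1 / G' ≤ 1 := by
        rw [div_le_one (by linarith)]; linarith
      nlinarith [one_div_pos.mpr h1]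
    have h3 : 1 / (c₁ + F') ≤ 1 / (c₁ + 1) := one_div_le_one_div_of_le hd1' (by linarith)
    have h4 : 1 / (1 / c₁ + F') ≤ 1 / (1 / c₁ + 1) := one_div_le_one_div_of_le hd2' (by linarith)
    linarith
  have hsum1 : 1 / (c₁ + 1) + 1 / (1 / c₁ + 1) = 1 := by
    field_simp
    ring
  have hle : 1 / G * (1 / (c₁ + F)) + 1 / (1 / c₁ + F) ≤ 1 := by
    have := key F G hF1 hG1
    linarith
  refine ⟨hle, ?_, ?_⟩
  · intro heq
    -- equality forces F = 1 and G = 1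
    have hFeq : F = 1 := by
      by_contra hne
      have hFgt : 1 < F := lt_of_le_of_ne hF1 (Ne.symm hne)
      have h3 : 1 / (c₁ + F) < 1 / (c₁ + 1) := one_div_lt_one_div_of_lt hd1' (by linarith)
      have h4 : 1 / (1 / c₁ + F) < 1 / (1 / c₁ + 1) := one_div_lt_one_div_of_lt hd2' (by linarith)
      have hGterm : 1 / G * (1 / (c₁ + F)) ≤ 1 / (c₁ + F) := by
        have h1G : 1 / G ≤ 1 := by rw [div_le_one (by linarith)]; linarith
        nlinarith [one_div_pos.mpr hd1]
      linarith
    have hGeq : G = 1 := by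
      by_contra hne
      have hGgt : 1 < G := lt_of_le_of_ne hG1 (Ne.symm hne)
      have hGterm : 1 / G * (1 / (c₁ + F)) < 1 / (c₁ + F) := by
        have h1G : 1 / G < 1 := by rw [div_lt_one (by linarith)]; linarith
        nlinarith [one_div_pos.mpr hd1]
      have h3 : 1 / (c₁ + F) ≤ 1 / (c₁ + 1) := one_div_le_one_div_of_le hd1' (by linarith)
      have h4 : 1 / (1 / c₁ + F) ≤ 1 / (1 / c₁ + 1) := one_div_le_one_div_of_le hd2' (by linarith)
      linarith
    exact ⟨(hyp_eq_one_iff hα hθ).mp hFeq, (hyp_eq_one_iff hα hθ₂).mp hGeq⟩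
  · rintro ⟨rfl, rfl⟩
    have h1 : F = 1 := hyp_zero α
    have h2 : G = 1 := hyp_zero α
    rw [h1, h2]
    have hne1 : c₁ + 1 ≠ 0 := by linarith
    have hne2 : 1 / c₁ + 1 ≠ 0 := by linarith
    field_simp
    ring
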